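/- arXiv:1411.5715 — 3 statements merged into one kernel-verified Lean document; each statement's English description precedes it below -/
import Mathlib

section
/- Let ζ : ℕ → ℝ be a characteristic index with ζ(0)=0, ζ(n)>0 for n≥1, and (-1)^(d-1)(Δ^d ζ)(r) > 0 for all r ≥ 0, d ≥ 1. Suppose ζ satisfies the weak continuity condition: for all integers r ≥ 0 and d ≥ 1, (Δ^d ζ)(r+1)/(Δ^d ζ)(r) = (Δζ)(r+d)/(Δζ)(r). If ζ is normalized with (Δζ)(0) = 1 and (Δζ)(1) = ρ/(ρ+1) for some ρ > 0, then (Δζ)(r) = ρ/(ρ+r) for all r ≥ 0, i.e., ζ(n) = ρ Σ_{j=0}^{n-1} 1/(ρ+j) is the harmonic process index. -/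
/-- `d`-th iterated forward difference of the sequence `ζ`, evaluated at `r`. -/
noncomputable def fdiff (ζ : ℕ → ℝ) (d r : ℕ) : ℝ :=
  ∑ j ∈ Finset.range (d + 1), (-1 : ℝ) ^ (d - j) * (d.choose j) * ζ (r + j)

lemma fd1 (ζ : ℕ → ℝ) (r : ℕ) : fdiff ζ 1 r = ζ (r + 1) - ζ r := by
  simp [fdiff, Finset.sum_range_succ]; ring

lemma fd2 (ζ : ℕ → ℝ) (r : ℕ) : fdiff ζ 2 r = ζ (r + 2) - 2 * ζ (r + 1) + ζ r := by
  simp [fdiff, Finset.sum_range_succ]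
  ring

theorem weak_continuity_characterizes_harmonic (ζ : ℕ → ℝ) (ρ : ℝ) (hρ : 0 < ρ)
    (h0 : ζ 0 = 0) (hpos : ∀ n : ℕ, 1 ≤ n → 0 < ζ n)
    (hsign : ∀ r d : ℕ, 1 ≤ d → 0 < (-1 : ℝ) ^ (d - 1) * fdiff ζ d r)
    (hwc : ∀ r d : ℕ, 1 ≤ d →
      fdiff ζ d (r + 1) / fdiff ζ d r = fdiff ζ 1 (r + d) / fdiff ζ 1 r)
    (hn0 : fdiff ζ 1 0 = 1) (hn1 : fdiff ζ 1 1 = ρ / (ρ + 1)) :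
    (∀ r : ℕ, fdiff ζ 1 r = ρ / (ρ + r)) ∧
    (∀ n : ℕ, ζ n = ρ * ∑ j ∈ Finset.range n, 1 / (ρ + j)) := by
  have hx : ∀ r : ℕ, (0:ℝ) < ρ + r := fun r => by positivity
  have key : ∀ r : ℕ, fdiff ζ 1 r = ρ / (ρ + r) ∧
      fdiff ζ 1 (r + 1) = ρ / (ρ + (r + 1 : ℕ)) := by
    intro r
    induction r with
    | zero =>
      constructor
      · rw [hn0]; simp [div_self (ne_of_gt hρ)]
      · rw [hn1]; norm_num
    | succ r ih =>
      obtain ⟨ha, hb⟩ := ih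
      refine ⟨hb, ?_⟩
      -- use weak continuity with d = 2
      have hw := hwc r 2 (by norm_num)
      have h2r : fdiff ζ 2 r = fdiff ζ 1 (r + 1) - fdiff ζ 1 r := by
        rw [fd2, fd1, fd1]; ring_nf
      have h2r1 : fdiff ζ 2 (r + 1) = fdiff ζ 1 (r + 2) - fdiff ζ 1 (r + 1) := by
        rw [fd2, fd1, fd1]; ring_nf
      have hs2 := hsign r 2 (by norm_num)
      have h2ne : fdiff ζ 2 r ≠ 0 := by
        intro h; rw [h] at hs2; simp at hs2
      have hane : fdiff ζ 1 r ≠ 0 := by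
        rw [ha]; positivity
      rw [h2r, h2r1, div_eq_div_iff (by rwa [h2r] at h2ne) hane] at hw
      have hxr := hx r
      have hxr1 : (0:ℝ) < ρ + r + 1 := by linarith
      have hxr2 : (0:ℝ) < ρ + r + 2 := by linarith
      have hb' : fdiff ζ 1 (r + 1) = ρ / (ρ + r + 1) := by
        rw [hb]; push_cast; ring_nf
      rw [ha, hb'] at hw
      have goal' : fdiff ζ 1 (r + 2) = ρ / (ρ + r + 2) := by
        have hlin : fdiff ζ 1 (r + 2) * (ρ * (ρ + r + 2)) = ρ * ρ := by
          field_simp at hw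
          nlinarith [hw]
        have hne : (ρ * (ρ + r + 2)) ≠ 0 := by positivity
        field_simp
        nlinarith [hlin]
      have : ((r : ℝ) + 1 + 1) = (((r + 1 + 1 : ℕ) : ℝ)) := by push_cast; ring
      rw [show r + 1 + 1 = r + 2 from rfl, goal']
      push_cast; ring_nf
  have key1 : ∀ r : ℕ, fdiff ζ 1 r = ρ / (ρ + r) := fun r => (key r).1
  refine ⟨key1, ?_⟩
  intro n
  induction n with
  | zero => simp [h0]
  | succ n ih =>
    have := fd1 ζ n
    have hζ : ζ (n + 1) = ζ n + fdiff ζ 1 n := by rw [this]; ring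
    rw [hζ, ih, key1 n, Finset.sum_range_succ]
    rw [mul_add, mul_one_div]
end

section
/- For the splitting rule q(n-1,1) = 1/n² (for n ≥ 1), the corresponding characteristic index is ζ(n) = c·n/(n+1) for some constant c > 0, and the resulting splitting probabilities are uniform: q(n-d, d) = (n-d)!·d!/(n·n!) for 1 ≤ d ≤ n. -/
/-- Splitting probabilities derived from a characteristic index `ζ`. -/
noncomputable def splitq (ζ : ℕ → ℝ) (r d : ℕ) : ℝ :=
  (-1 : ℝ) ^ (d - 1) * fdiff ζ d r / ζ (r + d)

lemma fdiff_eq_iter (ζ : ℕ → ℝ) (d r : ℕ) : fdiff ζ d r = (fwdDiff 1)^[d] ζ r := by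
  rw [fwdDiff_iter_eq_sum_shift, fdiff]
  refine Finset.sum_congr rfl fun j _ => ?_
  rw [zsmul_eq_mul, smul_eq_mul, mul_one]
  push_cast
  ring

lemma fdiff_succ (ζ : ℕ → ℝ) (d r : ℕ) :
    fdiff ζ (d + 1) r = fdiff ζ d (r + 1) - fdiff ζ d r := by
  simp only [fdiff_eq_iter, Function.iterate_succ', Function.comp_apply, fwdDiff]

lemma fdiff_closed (ζ : ℕ → ℝ) (c : ℝ) (hval : ∀ n : ℕ, ζ n = c * n / (n + 1)) (d r : ℕ) :
    fdiff ζ d r = (if d = 0 then c else 0)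
      - c * (-1) ^ d * d.factorial * r.factorial / (r + d + 1).factorial := by
  induction d generalizing r with
  | zero =>
      have h1 : ((r + 1).factorial : ℝ) = (r + 1) * r.factorial := by
        rw [Nat.factorial_succ]; push_cast; ring
      have h2 : ((r.factorial : ℝ)) ≠ 0 := by exact_mod_cast r.factorial_ne_zero
      have h3 : (r : ℝ) + 1 ≠ 0 := by positivity
      simp only [fdiff, zero_add, Finset.sum_range_one, Nat.add_zero, pow_zero,
        Nat.choose_self, Nat.factorial_zero, if_true, Nat.cast_one]
      rw [hval r, h1]
      field_simp
      ring
  | succ d ih =>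
      have e1 : r + 1 + d + 1 = r + (d + 1) + 1 := by ring
      have e2 : r + (d + 1) + 1 = (r + d + 1) + 1 := by ring
      rw [fdiff_succ, ih, ih, e1, e2, if_neg d.succ_ne_zero, sub_sub_sub_cancel_left]
      have h1 : (((r + d + 1) + 1).factorial : ℝ)
          = ((r + d + 1 : ℕ) + 1) * (r + d + 1).factorial := by
        rw [Nat.factorial_succ]; push_cast; ring
      have h2 : ((r + 1).factorial : ℝ) = (r + 1) * r.factorial := by
        rw [Nat.factorial_succ]; push_cast; ring
      have h3 : ((d + 1).factorial : ℝ) = (d + 1) * d.factorial := by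
        rw [Nat.factorial_succ]; push_cast; ring
      have p1 : ((r + d + 1).factorial : ℝ) ≠ 0 := by
        exact_mod_cast (r + d + 1).factorial_ne_zero
      have p2 : ((r + d + 1 : ℕ) : ℝ) + 1 ≠ 0 := by positivity
      rw [h1, h2, h3, pow_succ]
      push_cast
      field_simp
      ring

/-- The splitting rule `q(n-1,1) = 1/n²` yields the index `ζ(n) ∝ n/(n+1)` and
the uniform splitting probabilities `q(n-d,d) = (n-d)! d! / (n ⬝ n!)`. -/
theorem uniform_splitting_rule (ζ : ℕ → ℝ) (h0 : ζ 0 = 0) (h1 : 0 < ζ 1)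
    (hrec : ∀ n : ℕ, 1 ≤ n → ζ (n + 1) = ζ n / (1 - 1 / ((n : ℝ) + 1) ^ 2)) :
    (∃ c : ℝ, 0 < c ∧ ∀ n : ℕ, ζ n = c * n / (n + 1)) ∧
    (∀ n d : ℕ, 1 ≤ d → d ≤ n →
      splitq ζ (n - d) d = ((n - d).factorial * d.factorial : ℝ) / (n * n.factorial)) := by
  set c : ℝ := 2 * ζ 1 with hc
  have hcpos : 0 < c := by positivity
  have hval : ∀ n : ℕ, ζ n = c * n / (n + 1) := by
    intro n
    induction n with
    | zero => simp [h0]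
    | succ n ih =>
        rcases Nat.eq_zero_or_pos n with hn | hn
        · subst hn
          simp [hc]
          ring
        · have hn1 : (1 : ℝ) ≤ (n : ℝ) := by exact_mod_cast hn
          have hne1 : ((n : ℝ) + 1) ≠ 0 := by positivity
          have hne2 : ((n : ℝ) + 2) ≠ 0 := by positivity
          have hne0 : (n : ℝ) ≠ 0 := by positivity
          have hden : (1 : ℝ) - 1 / ((n : ℝ) + 1) ^ 2 = (n * (n + 2)) / ((n : ℝ) + 1) ^ 2 := by
            field_simp
            ring
          rw [hrec n hn, ih, hden]
          push_cast
          field_simp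
          ring
  refine ⟨⟨c, hcpos, hval⟩, fun n d hd hn => ?_⟩
  rw [splitq]
  have hn1 : 1 ≤ n := hd.trans hn
  have hkey : (n - d) + d = n := Nat.sub_add_cancel hn
  have e3 : (n - d) + d + 1 = n + 1 := by omega
  obtain ⟨e, rfl⟩ := Nat.exists_eq_add_of_le hd
  have hs : (-1 : ℝ) ^ (1 + e - 1) * (-1) ^ (1 + e) = -1 := by
    have h : 1 + e - 1 = e := by omega
    rw [h]
    calc (-1 : ℝ) ^ e * (-1) ^ (1 + e) = -((-1 : ℝ) ^ (e + e)) := by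
          rw [pow_add, pow_one, pow_add]; ring
      _ = -1 := by rw [Even.neg_one_pow ⟨e, rfl⟩]
  have hnum : (-1 : ℝ) ^ (1 + e - 1) * fdiff ζ (1 + e) (n - (1 + e))
      = c * ((1 + e).factorial : ℝ) * ((n - (1 + e)).factorial : ℝ) / ((n + 1).factorial : ℝ) := by
    rw [fdiff_closed ζ c hval, e3, if_neg (by omega : ¬ (1 + e) = 0)]
    calc (-1 : ℝ) ^ (1 + e - 1) * (0 - c * (-1) ^ (1 + e) * ((1 + e).factorial : ℝ)
            * ((n - (1 + e)).factorial : ℝ) / ((n + 1).factorial : ℝ))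
        = ((-1 : ℝ) ^ (1 + e - 1) * (-1) ^ (1 + e)) * (-(c * ((1 + e).factorial : ℝ)
            * ((n - (1 + e)).factorial : ℝ) / ((n + 1).factorial : ℝ))) := by ring
      _ = _ := by rw [hs]; ring
  rw [hkey, hnum, hval n]
  have h4 : ((n + 1).factorial : ℝ) = ((n : ℝ) + 1) * (n.factorial : ℝ) := by
    rw [Nat.factorial_succ]; push_cast; ring
  have hne0 : (n : ℝ) ≠ 0 := by
    have : (1 : ℝ) ≤ (n : ℝ) := by exact_mod_cast hn1
    positivity
  have hfac : ((n.factorial : ℝ)) ≠ 0 := by exact_mod_cast n.factorial_ne_zero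
  have hne1 : ((n : ℝ) + 1) ≠ 0 := by positivity
  rw [h4]
  field_simp
end

section
/- For ρ > 0 and β ∈ (-1,0), the sequence ζ(n) = ∫_0^1 (1-s^n) s^(ρ-1) (1-s)^(β-1) ds satisfies ζ(n) = Σ_{j=0}^{n-1} Γ(j+ρ)Γ(β+1)/Γ(j+1+β+ρ), and ζ(n)/n^(-β) converges to Γ(1+β)/(-β) as n → ∞. -/
open Filter Real MeasureTheory intervalIntegral Topology

lemma realBeta_eq (a b : ℝ) (ha : 0 < a) (hb : 0 < b) :
    ∫ s in (0:ℝ)..1, s ^ (a-1) * (1-s) ^ (b-1)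
      = Real.Gamma a * Real.Gamma b / Real.Gamma (a+b) := by
  have hab : Real.Gamma (a+b) ≠ 0 := (Real.Gamma_pos_of_pos (by linarith)).ne'
  have hco : (∫ s in (0:ℝ)..1, ((s ^ (a-1) * (1-s) ^ (b-1) : ℝ) : ℂ))
      = Complex.betaIntegral a b := by
    rw [Complex.betaIntegral]
    apply intervalIntegral.integral_congr
    intro s hs
    rw [Set.uIcc_of_le (by norm_num : (0:ℝ) ≤ 1)] at hs
    obtain ⟨h0, h1⟩ := hs
    simp only []
    show ((s ^ (a-1) * (1-s) ^ (b-1) : ℝ) : ℂ) = (s:ℂ) ^ ((a:ℂ) - 1) * (1 - (s:ℂ)) ^ ((b:ℂ) - 1)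
    rw [Complex.ofReal_mul, Complex.ofReal_cpow h0, Complex.ofReal_cpow (by linarith : (0:ℝ) ≤ 1 - s)]
    push_cast
    ring
  have hbeta : Complex.betaIntegral a b
      = ((Real.Gamma a * Real.Gamma b / Real.Gamma (a+b) : ℝ) : ℂ) := by
    have := Complex.Gamma_mul_Gamma_eq_betaIntegral
      (s := (a:ℂ)) (t := (b:ℂ)) (by simpa using ha) (by simpa using hb)
    have h2 : Complex.Gamma ((a:ℂ) + b) ≠ 0 := by
      rw [← Complex.ofReal_add, Complex.Gamma_ofReal]
      exact_mod_cast hab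
    rw [Complex.ofReal_div, eq_div_iff (by rwa [Ne, Complex.ofReal_eq_zero]), mul_comm,
      ← Complex.Gamma_ofReal (a+b), Complex.ofReal_add, ← this,
      Complex.Gamma_ofReal, Complex.Gamma_ofReal, Complex.ofReal_mul]
  rw [intervalIntegral.integral_ofReal] at hco
  exact_mod_cast hco.trans hbeta

lemma realBeta_intble (a b : ℝ) (ha : 0 < a) (hb : 0 < b) (hb1 : b ≠ 1) :
    IntervalIntegrable (fun s : ℝ => s ^ (a-1) * (1-s) ^ (b-1)) volume 0 1 := by
  have h := (Complex.betaIntegral_convergent (u := (a:ℂ)) (v := (b:ℂ))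
    (by simpa using ha) (by simpa using hb)).norm
  rw [intervalIntegrable_iff, Set.uIoc_of_le (by norm_num : (0:ℝ) ≤ 1)] at h ⊢
  refine h.congr_fun (fun x hx => ?_) measurableSet_Ioc
  obtain ⟨h0, h1⟩ := hx
  have h1x : (0:ℝ) ≤ 1 - x := by linarith
  beta_reduce
  rw [norm_mul,
    Complex.norm_cpow_eq_rpow_re_of_pos h0,
    show (1 - (x:ℂ)) = ((1-x : ℝ) : ℂ) by push_cast; ring,
    Complex.norm_cpow_eq_rpow_re_of_nonneg h1x (by simpa using sub_ne_zero.2 hb1)]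
  norm_num

lemma part1 (ρ β : ℝ) (hρ : 0 < ρ) (hβ1 : -1 < β) (hβ0 : β < 0) (n : ℕ) :
    (∫ s in (0:ℝ)..1, (1 - s ^ n) * s ^ (ρ - 1) * (1 - s) ^ (β - 1))
      = ∑ j ∈ Finset.range n,
        Real.Gamma (j + ρ) * Real.Gamma (β + 1) / Real.Gamma (j + 1 + β + ρ) := by
  have hb1 : (β + 1 : ℝ) ≠ 1 := fun h => hβ0.ne (by linarith)
  have hint : ∀ j : ℕ, IntervalIntegrable
      (fun s : ℝ => s ^ (((j:ℝ)+ρ)-1) * (1-s) ^ ((β+1)-1)) volume 0 1 :=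
    fun j => realBeta_intble _ _ (by positivity) (by linarith) hb1
  have step1 : (∫ s in (0:ℝ)..1, (1 - s ^ n) * s ^ (ρ - 1) * (1 - s) ^ (β - 1))
      = ∫ s in (0:ℝ)..1, ∑ j ∈ Finset.range n, s ^ (((j:ℝ)+ρ)-1) * (1-s) ^ ((β+1)-1) := by
    apply intervalIntegral.integral_congr_ae
    have hne : ∀ᵐ x : ℝ, x ≠ 1 := by
      refine ae_iff.2 ?_
      simpa [not_not, Set.setOf_eq_eq_singleton] using volume_singleton (a := (1:ℝ))
    filter_upwards [hne] with s hs1 hsI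
    rw [Set.uIoc_of_le (by norm_num : (0:ℝ) ≤ 1)] at hsI
    obtain ⟨h0, h1⟩ := hsI
    have h1' : s < 1 := lt_of_le_of_ne h1 hs1
    have hpos : (0:ℝ) < 1 - s := by linarith
    have e2 := Real.rpow_add hpos 1 (β-1)
    rw [show (1:ℝ)+(β-1)=β from by ring, Real.rpow_one] at e2
    have hterm : ∀ j ∈ Finset.range n, s ^ (((j:ℝ)+ρ)-1) * (1-s) ^ ((β+1)-1)
        = s ^ j * ((1-s) * (s ^ (ρ-1) * (1-s) ^ (β-1))) := by
      intro j _
      rw [show ((j:ℝ)+ρ)-1 = (j:ℝ)+(ρ-1) from by ring, Real.rpow_add h0,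
        Real.rpow_natCast, show (β+1)-1 = β from by ring, e2]
      ring
    rw [Finset.sum_congr rfl hterm, ← Finset.sum_mul]
    have e3 : (1 - s ^ n) = (∑ j ∈ Finset.range n, s ^ j) * (1 - s) := by
      linear_combination geom_sum_mul s n
    rw [e3]; ring
  rw [step1, intervalIntegral.integral_finset_sum (fun j _ => hint j)]
  refine Finset.sum_congr rfl fun j _ => ?_
  rw [realBeta_eq _ _ (by positivity) (by linarith),
    show ((j:ℝ)+ρ)+(β+1) = (j:ℝ)+1+β+ρ from by ring]

lemma gautschi_lower (t : ℝ) (ht0 : 0 < t) (ht1 : t < 1) (z : ℝ) (hz : 0 < z) :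
    z ^ (-t) ≤ Real.Gamma z / Real.Gamma (z+t) := by
  have hGz : 0 < Real.Gamma z := Real.Gamma_pos_of_pos hz
  have hGzt : 0 < Real.Gamma (z+t) := Real.Gamma_pos_of_pos (by linarith)
  have key : Real.Gamma (z+t) ≤ Real.Gamma z * z ^ t := by
    have h := Real.Gamma_mul_add_mul_le_rpow_Gamma_mul_rpow_Gamma
      (s := z) (t := z+1) hz (by linarith) (by linarith : (0:ℝ) < 1-t) ht0 (by ring)
    rw [show (1-t)*z + t*(z+1) = z+t from by ring] at h
    refine h.trans_eq ?_
    rw [Real.Gamma_add_one hz.ne', Real.mul_rpow hz.le hGz.le]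
    have hr : Real.Gamma z ^ (1-t) * Real.Gamma z ^ t = Real.Gamma z := by
      rw [← Real.rpow_add hGz, show (1-t)+t = 1 from by ring, Real.rpow_one]
    linear_combination z ^ t * hr
  rw [le_div_iff₀ hGzt, Real.rpow_neg hz.le]
  calc (z ^ t)⁻¹ * Real.Gamma (z+t) ≤ (z ^ t)⁻¹ * (Real.Gamma z * z ^ t) := by
        gcongr
    _ = Real.Gamma z := by
        field_simp

lemma gautschi_upper (t : ℝ) (ht0 : 0 < t) (ht1 : t < 1) (z : ℝ) (hz : 0 < z) :
    Real.Gamma z / Real.Gamma (z+t) ≤ (z+t) ^ (1-t) / z := by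
  have hGzt : 0 < Real.Gamma (z+t) := Real.Gamma_pos_of_pos (by linarith)
  have key : z * Real.Gamma z ≤ Real.Gamma (z+t) * (z+t) ^ (1-t) := by
    have h := Real.Gamma_mul_add_mul_le_rpow_Gamma_mul_rpow_Gamma
      (s := z+t) (t := z+t+1) (by linarith) (by linarith) ht0 (by linarith : (0:ℝ) < 1-t)
      (by ring)
    rw [show t*(z+t) + (1-t)*(z+t+1) = z+1 from by ring,
      Real.Gamma_add_one hz.ne'] at h
    refine h.trans_eq ?_
    rw [Real.Gamma_add_one (by linarith : z+t ≠ 0),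
      Real.mul_rpow (by linarith : (0:ℝ) ≤ z+t) hGzt.le]
    have hr : Real.Gamma (z+t) ^ t * Real.Gamma (z+t) ^ (1-t) = Real.Gamma (z+t) := by
      rw [← Real.rpow_add hGzt, show t+(1-t) = 1 from by ring, Real.rpow_one]
    linear_combination (z+t) ^ (1-t) * hr
  rw [div_le_div_iff₀ hGzt hz]
  nlinarith [key]

lemma ratio_div_tendsto (ρ : ℝ) (hρ : 0 < ρ) :
    Tendsto (fun j : ℕ => ((j:ℝ)+ρ)/(j:ℝ)) atTop (𝓝 1) := by
  have h : Tendsto (fun j : ℕ => 1 + ρ/(j:ℝ)) atTop (𝓝 (1+0)) :=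
    tendsto_const_nhds.add (tendsto_const_div_atTop_nhds_zero_nat ρ)
  rw [add_zero] at h
  refine h.congr' ?_
  filter_upwards [eventually_ge_atTop 1] with j hj
  have hj0 : (0:ℝ) < (j:ℝ) := by exact_mod_cast hj
  field_simp

lemma gamma_ratio_tendsto (ρ t : ℝ) (hρ : 0 < ρ) (ht0 : 0 < t) (ht1 : t < 1) :
    Tendsto (fun j : ℕ => Real.Gamma ((j:ℝ)+ρ) / Real.Gamma (((j:ℝ)+ρ)+t) * (j:ℝ)^t)
      atTop (𝓝 1) := by
  have hA := ratio_div_tendsto ρ hρ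
  have hB := ratio_div_tendsto (ρ+t) (by linarith)
  have hA' : Tendsto (fun j : ℕ => (j:ℝ)/((j:ℝ)+ρ)) atTop (𝓝 1) := by
    have := (hA.inv₀ one_ne_zero)
    rw [inv_one] at this
    refine this.congr' ?_
    filter_upwards [eventually_ge_atTop 1] with j hj
    rw [inv_div]
  have hL : Tendsto (fun j : ℕ => ((j:ℝ)/((j:ℝ)+ρ))^t) atTop (𝓝 1) := by
    have := hA'.rpow_const (p := t) (Or.inr ht0.le)
    rwa [Real.one_rpow] at this
  have hU : Tendsto (fun j : ℕ => (((j:ℝ)+(ρ+t))/(j:ℝ))^(1-t) * ((j:ℝ)/((j:ℝ)+ρ)))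
      atTop (𝓝 1) := by
    have h1 := hB.rpow_const (p := 1-t) (Or.inr (by linarith))
    rw [Real.one_rpow] at h1
    have := h1.mul hA'
    rwa [mul_one] at this
  refine tendsto_of_tendsto_of_tendsto_of_le_of_le' hL hU ?_ ?_
  · filter_upwards [eventually_ge_atTop 1] with j hj
    have hj0 : (0:ℝ) < (j:ℝ) := by exact_mod_cast hj
    have hz : (0:ℝ) < (j:ℝ)+ρ := by linarith
    have := gautschi_lower t ht0 ht1 ((j:ℝ)+ρ) hz
    calc ((j:ℝ)/((j:ℝ)+ρ))^t = ((j:ℝ)+ρ)^(-t) * (j:ℝ)^t := by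
          rw [Real.div_rpow hj0.le hz.le, Real.rpow_neg hz.le]
          ring
      _ ≤ Real.Gamma ((j:ℝ)+ρ) / Real.Gamma (((j:ℝ)+ρ)+t) * (j:ℝ)^t := by
          gcongr
  · filter_upwards [eventually_ge_atTop 1] with j hj
    have hj0 : (0:ℝ) < (j:ℝ) := by exact_mod_cast hj
    have hz : (0:ℝ) < (j:ℝ)+ρ := by linarith
    have hb := gautschi_upper t ht0 ht1 ((j:ℝ)+ρ) hz
    calc Real.Gamma ((j:ℝ)+ρ) / Real.Gamma (((j:ℝ)+ρ)+t) * (j:ℝ)^t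
        ≤ ((((j:ℝ)+ρ)+t)^(1-t) / ((j:ℝ)+ρ)) * (j:ℝ)^t := by
          gcongr
      _ = (((j:ℝ)+(ρ+t))/(j:ℝ))^(1-t) * ((j:ℝ)/((j:ℝ)+ρ)) := by
          have hne : (j:ℝ)^(1-t) ≠ 0 := (Real.rpow_pos_of_pos hj0 _).ne'
          rw [show (j:ℝ)+(ρ+t) = ((j:ℝ)+ρ)+t from by ring,
            Real.div_rpow (by linarith : (0:ℝ) ≤ ((j:ℝ)+ρ)+t) hj0.le]
          have hjt : (j:ℝ)^t = (j:ℝ) / (j:ℝ)^(1-t) := by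
            rw [eq_div_iff hne, ← Real.rpow_add hj0, show t+(1-t) = 1 from by ring,
              Real.rpow_one]
          rw [hjt]
          field_simp

lemma g_mul_tendsto (β : ℝ) (hβ0 : β < 0) :
    Tendsto (fun j : ℕ => (((j:ℝ)+1)^(-β) - (j:ℝ)^(-β)) * (j:ℝ)^(β+1)) atTop (𝓝 (-β)) := by
  have hd : HasDerivAt (fun x : ℝ => x ^ (-β)) (-β) 1 := by
    have := Real.hasDerivAt_rpow_const (x := (1:ℝ)) (p := -β) (Or.inl one_ne_zero)
    simpa using this
  have hslope := hasDerivAt_iff_tendsto_slope.1 hd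
  have hy : Tendsto (fun j : ℕ => 1 + 1/(j:ℝ)) atTop (𝓝[≠] (1:ℝ)) := by
    apply tendsto_nhdsWithin_of_tendsto_nhds_of_eventually_within
    · have : Tendsto (fun j : ℕ => 1 + 1/(j:ℝ)) atTop (𝓝 (1+0)) :=
        tendsto_const_nhds.add (tendsto_const_div_atTop_nhds_zero_nat 1)
      simpa using this
    · filter_upwards [eventually_ge_atTop 1] with j hj
      have hj0 : (0:ℝ) < (j:ℝ) := by exact_mod_cast hj
      have h1 : (0:ℝ) < 1/(j:ℝ) := by positivity
      simp only [Set.mem_compl_iff, Set.mem_singleton_iff]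
      intro h
      nlinarith
  have key := hslope.comp hy
  refine key.congr' ?_
  filter_upwards [eventually_ge_atTop 1] with j hj
  have hj0 : (0:ℝ) < (j:ℝ) := by exact_mod_cast hj
  have e1 : ((j:ℝ)+1)^(-β) = (j:ℝ)^(-β) * (1+1/(j:ℝ))^(-β) := by
    rw [← Real.mul_rpow hj0.le (by positivity)]
    congr 1
    field_simp
  have e2 : (j:ℝ)^(-β) * (j:ℝ)^(β+1) = (j:ℝ) := by
    rw [← Real.rpow_add hj0, show -β+(β+1) = 1 from by ring, Real.rpow_one]
  show slope (fun x : ℝ => x ^ (-β)) 1 (1+1/(j:ℝ))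
      = (((j:ℝ)+1)^(-β) - (j:ℝ)^(-β)) * (j:ℝ)^(β+1)
  rw [slope_def_field]
  simp only [Real.one_rpow]
  rw [show (1+1/(j:ℝ)) - 1 = ((j:ℝ))⁻¹ from by rw [one_div]; ring, div_inv_eq_mul]
  rw [e1]
  linear_combination (1 - (1+1/(j:ℝ))^(-β)) * e2

theorem beta_splitting_negative_beta (ρ β : ℝ) (hρ : 0 < ρ) (hβ1 : -1 < β) (hβ0 : β < 0)
    (ζ : ℕ → ℝ)
    (hζ : ∀ n : ℕ, ζ n = ∫ s in (0 : ℝ)..1, (1 - s ^ n) * s ^ (ρ - 1) * (1 - s) ^ (β - 1)) :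
    (∀ n : ℕ, ζ n = ∑ j ∈ Finset.range n,
      Real.Gamma (j + ρ) * Real.Gamma (β + 1) / Real.Gamma (j + 1 + β + ρ)) ∧
    Tendsto (fun n : ℕ => ζ n / ((n : ℝ) ^ (-β)))
      atTop (nhds (Real.Gamma (1 + β) / (-β))) := by
  have hsum_eq : ∀ n : ℕ, ζ n = ∑ j ∈ Finset.range n,
      Real.Gamma (j + ρ) * Real.Gamma (β + 1) / Real.Gamma (j + 1 + β + ρ) :=
    fun n => (hζ n).trans (part1 ρ β hρ hβ1 hβ0 n)
  refine ⟨hsum_eq, ?_⟩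
  set a : ℕ → ℝ := fun j => Real.Gamma (j + ρ) * Real.Gamma (β + 1) / Real.Gamma (j + 1 + β + ρ)
    with ha_def
  set g : ℕ → ℝ := fun j => ((j:ℝ)+1) ^ (-β) - (j:ℝ) ^ (-β) with hg_def
  set c : ℝ := Real.Gamma (β + 1) / (-β) with hc_def
  have hβne : (-β) ≠ 0 := neg_ne_zero.2 hβ0.ne
  have hgpos : ∀ j, 0 < g j := by
    intro j
    have := Real.rpow_lt_rpow (Nat.cast_nonneg j) (lt_add_one (j:ℝ)) (neg_pos.2 hβ0)
    simpa [hg_def, sub_pos] using this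
  have hgsum : ∀ n : ℕ, ∑ j ∈ Finset.range n, g j = (n:ℝ) ^ (-β) := by
    intro n
    have h := Finset.sum_range_sub (f := fun j : ℕ => ((j:ℝ)) ^ (-β)) n
    simp only [Nat.cast_zero, Real.zero_rpow hβne, sub_zero] at h
    rw [← h]
    refine Finset.sum_congr rfl fun j _ => ?_
    simp [hg_def]
  have ha_t : Tendsto (fun j : ℕ => a j * (j:ℝ) ^ (β+1)) atTop (𝓝 (Real.Gamma (β+1))) := by
    have hr := gamma_ratio_tendsto ρ (β+1) hρ (by linarith) (by linarith)
    have h2 := hr.const_mul (Real.Gamma (β+1))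
    rw [mul_one] at h2
    refine h2.congr (fun j => ?_)
    simp only [ha_def]
    rw [show (j:ℝ)+ρ+(β+1) = (j:ℝ)+1+β+ρ from by ring]
    ring
  have hg_t := g_mul_tendsto β hβ0
  have hdiv : Tendsto (fun j : ℕ => a j / g j) atTop (𝓝 c) := by
    have h := ha_t.div hg_t hβne
    refine h.congr' ?_
    filter_upwards [eventually_ge_atTop 1] with j hj
    have hj0 : (0:ℝ) < (j:ℝ) := by exact_mod_cast hj
    exact mul_div_mul_right _ _ (Real.rpow_pos_of_pos hj0 (β+1)).ne'
  have hlo : (fun j : ℕ => a j - c * g j) =o[atTop] g := by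
    rw [Asymptotics.isLittleO_iff_tendsto (fun j h => absurd h (hgpos j).ne')]
    have h := hdiv.sub_const c
    rw [sub_self] at h
    refine h.congr (fun j => ?_)
    rw [sub_div, mul_div_assoc, div_self (hgpos j).ne', mul_one]
  have h'g : Tendsto (fun n : ℕ => ∑ i ∈ Finset.range n, g i) atTop atTop := by
    have := (tendsto_rpow_atTop (by linarith : (0:ℝ) < -β)).comp
      tendsto_natCast_atTop_atTop (α := ℕ)
    refine this.congr (fun n => ?_)
    exact (hgsum n).symm
  have hsum := hlo.sum_range (fun i => (hgpos i).le) h'g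
  have ho2 : (fun n : ℕ => (∑ j ∈ Finset.range n, a j) - c * (n:ℝ) ^ (-β))
      =o[atTop] (fun n : ℕ => (n:ℝ) ^ (-β)) := by
    refine hsum.congr' ?_ ?_
    · refine Eventually.of_forall (fun n => ?_)
      simp only [Finset.sum_sub_distrib, ← Finset.mul_sum, hgsum]
    · exact Eventually.of_forall (fun n => hgsum n)
  have htd := ho2.tendsto_div_nhds_zero
  have hfin := htd.add_const c
  rw [zero_add] at hfin
  have : Tendsto (fun n : ℕ => ζ n / ((n : ℝ) ^ (-β))) atTop (𝓝 c) := by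
    refine hfin.congr' ?_
    filter_upwards [eventually_ge_atTop 1] with n hn
    have hn0 : (0:ℝ) < (n:ℝ) := by exact_mod_cast hn
    have hX : ((n:ℝ)) ^ (-β) ≠ 0 := (Real.rpow_pos_of_pos hn0 _).ne'
    rw [hsum_eq n, sub_div, mul_div_assoc, div_self hX, mul_one]
    ring
  rwa [show (1:ℝ)+β = β+1 from add_comm 1 β]
end
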